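/- Let (G,P) be a quasi-lattice ordered group and let x ∈ PP⁻¹. Then there is a unique pair a, b ∈ P such that x = ab⁻¹ and a ∧ᵣ b = 1, and this pair is precisely the minimal pair for x: for every u, v ∈ P with x = uv⁻¹ one has a ≤ u and b ≤ v. -/
import Mathlib


section Order

variable {H : Type*} [Group H]

/-- `x ≤ y` in the left-invariant partial order determined by the cone `P`. -/
def lle (P : Submonoid H) (x y : H) : Prop := x⁻¹ * y ∈ P

/-- `x ≤ᵣ y` in the right-invariant partial order determined by the cone `P`. -/
def rle (P : Submonoid H) (x y : H) : Prop := y * x⁻¹ ∈ P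

/-- `x` and `y` have a common upper bound for the left-invariant order. -/
def HasUB (P : Submonoid H) (x y : H) : Prop := ∃ z, lle P x z ∧ lle P y z

/-- `m` is a least upper bound of `x` and `y` for the left-invariant order. -/
def IsLub' (P : Submonoid H) (x y m : H) : Prop :=
  lle P x m ∧ lle P y m ∧ ∀ w, lle P x w → lle P y w → lle P m w

/-- `w` is a greatest lower bound of `u` and `v` for the right-invariant order
(greatest among *all* common right lower bounds in the group). -/
def IsRGlb (P : Submonoid H) (u v w : H) : Prop :=
  rle P w u ∧ rle P w v ∧ ∀ z, rle P z u → rle P z v → rle P z w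

/-- `(H,P)` is a partially ordered group: `P ∩ P⁻¹ = {1}`. -/
def IsPoGroup (P : Submonoid H) : Prop := ∀ x : H, x ∈ P → x⁻¹ ∈ P → x = 1

/-- `(H,P)` is a quasi-lattice ordered group: it is a partially ordered group in which
every pair of elements with a common upper bound has a least upper bound. -/
def IsQLO (P : Submonoid H) : Prop :=
  IsPoGroup P ∧ ∀ x y : H, HasUB P x y → ∃ m, IsLub' P x y m

end Order

/-- In a quasi-lattice ordered group `(H,P)`, every `x ∈ PP⁻¹` admits a
unique pair `a, b ∈ P` with `x = ab⁻¹` and `a ∧ᵣ b = 1`, and this pair is the minimal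
pair for `x`: whenever `x = uv⁻¹` with `u, v ∈ P` one has `a ≤ u` and `b ≤ v`. -/
theorem unique_reduced_fraction {H : Type*} [Group H] (P : Submonoid H)
    (hqlo : IsQLO P) (x : H) (hx : ∃ u ∈ P, ∃ v ∈ P, x = u * v⁻¹) :
    ∃ a b : H, (a ∈ P ∧ b ∈ P ∧ x = a * b⁻¹ ∧ IsRGlb P a b 1) ∧
      (∀ u v : H, u ∈ P → v ∈ P → x = u * v⁻¹ → lle P a u ∧ lle P b v) ∧
      (∀ a' b' : H, a' ∈ P → b' ∈ P → x = a' * b'⁻¹ → IsRGlb P a' b' 1 →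
        a' = a ∧ b' = b) := by
  obtain ⟨u0, hu0, v0, hv0, hx0⟩ := hx
  obtain ⟨hpo, hlub⟩ := hqlo
  have hub : HasUB P x 1 := by
    refine ⟨u0, ?_, ?_⟩
    · show x⁻¹ * u0 ∈ P
      have : x⁻¹ * u0 = v0 := by rw [hx0]; group
      rw [this]; exact hv0
    · show (1 : H)⁻¹ * u0 ∈ P
      simpa using hu0
  obtain ⟨m, hxm, h1m, hmin⟩ := hlub x 1 hub
  have haP : m ∈ P := by simpa [lle] using h1m
  have hbP : x⁻¹ * m ∈ P := hxm
  have hxab : x = m * (x⁻¹ * m)⁻¹ := by group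
  have hminpair : ∀ u v : H, u ∈ P → v ∈ P → x = u * v⁻¹ →
      lle P m u ∧ lle P (x⁻¹ * m) v := by
    intro u v huP hvP hxuv
    have hxu : lle P x u := by
      show x⁻¹ * u ∈ P
      have : x⁻¹ * u = v := by rw [hxuv]; group
      rw [this]; exact hvP
    have h1u : lle P 1 u := by simpa [lle] using huP
    have hmu : lle P m u := hmin u hxu h1u
    refine ⟨hmu, ?_⟩
    show (x⁻¹ * m)⁻¹ * v ∈ P
    have : (x⁻¹ * m)⁻¹ * v = m⁻¹ * u := by rw [hxuv]; group
    rw [this]; exact hmu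
  refine ⟨m, x⁻¹ * m, ⟨haP, hbP, hxab, ?_, ?_, ?_⟩, hminpair, ?_⟩
  · show m * (1 : H)⁻¹ ∈ P
    simpa using haP
  · show (x⁻¹ * m) * (1 : H)⁻¹ ∈ P
    simpa using hbP
  · intro z hz1 hz2
    have hz1' : m * z⁻¹ ∈ P := hz1
    have hz2' : (x⁻¹ * m) * z⁻¹ ∈ P := hz2
    have hx' : x = (m * z⁻¹) * ((x⁻¹ * m) * z⁻¹)⁻¹ := by group
    have hmem : m⁻¹ * (m * z⁻¹) ∈ P := (hminpair _ _ hz1' hz2' hx').1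
    show (1 : H) * z⁻¹ ∈ P
    have h : m⁻¹ * (m * z⁻¹) = z⁻¹ := by group
    rw [h] at hmem
    simpa using hmem
  · intro a' b' ha' hb' hxab' hglb
    have hmin' := hminpair a' b' ha' hb' hxab'
    have hc : m⁻¹ * a' ∈ P := hmin'.1
    set c := m⁻¹ * a' with hc_def
    have hac : a' = m * c := by rw [hc_def]; group
    have hbc : b' = (x⁻¹ * m) * c := by
      have : b' = x⁻¹ * a' := by
        have := hxab'
        rw [this]; group
      rw [this, hac]; group
    have h1 : rle P c a' := by
      show a' * c⁻¹ ∈ P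
      have : a' * c⁻¹ = m := by rw [hac]; group
      rw [this]; exact haP
    have h2 : rle P c b' := by
      show b' * c⁻¹ ∈ P
      have : b' * c⁻¹ = x⁻¹ * m := by rw [hbc]; group
      rw [this]; exact hbP
    have h3 : rle P c 1 := hglb.2.2 c h1 h2
    have hcinv : c⁻¹ ∈ P := by simpa [rle] using h3
    have hceq : c = 1 := hpo c hc hcinv
    constructor
    · rw [hac, hceq]; group
    · rw [hbc, hceq]; group
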